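/- Let k be a field and let (A, m) be a commutative noetherian local k-algebra with dim_k(A/m) < ∞. Let E be the A-submodule of Hom_k(A,k) consisting of those k-linear functionals f for which f vanishes on m^n for some n ≥ 1, where A acts on Hom_k(A,k) by (a·f)(x) = f(ax). Then for every finitely generated A-module Y, the k-linear map Hom_A(Y,E) → Hom_k(Y,k), sending g to the functional y ↦ g(y)(1), is injective, and its image is exactly the set of k-linear functionals h : Y → k for which h vanishes on m^n·Y for some n ≥ 1. -/
import Mathlib


universe u

variable (k : Type u) (A : Type u) [Field k] [CommRing A] [Algebra k A]

/-- The action of `A` on `Hom_k(A,k)` given by `(a • f) x = f (a * x)`. -/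
noncomputable instance dualSMul : SMul A (A →ₗ[k] k) :=
  ⟨fun a f => f ∘ₗ LinearMap.mulLeft k a⟩

lemma dual_smul_apply (a : A) (f : A →ₗ[k] k) (x : A) : (a • f) x = f (a * x) := rfl

/-- `Hom_k(A,k)` is an `A`-module via `(a • f) x = f (a * x)`. -/
noncomputable instance dualModule : Module A (A →ₗ[k] k) where
  one_smul f := LinearMap.ext fun x => by simp [dual_smul_apply]
  mul_smul a b f := LinearMap.ext fun x => by
    simp only [dual_smul_apply]
    congr 1
    ring
  smul_zero a := rfl
  zero_smul f := LinearMap.ext fun x => by simp [dual_smul_apply]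
  add_smul a b f := LinearMap.ext fun x => by
    simp [dual_smul_apply, add_mul]
  smul_add a f g := rfl

instance : IsScalarTower k A (A →ₗ[k] k) :=
  ⟨fun c a f => LinearMap.ext fun x => by
    simp only [dual_smul_apply, LinearMap.smul_apply, smul_mul_assoc, map_smul]⟩

instance : SMulCommClass A k (A →ₗ[k] k) :=
  ⟨fun _ _ _ => LinearMap.ext fun _ => rfl⟩

variable [IsLocalRing A]

/-- The `m`-torsion submodule `E` of `Hom_k(A,k)`, consisting of the functionals that
vanish on a power of the maximal ideal `m`. -/
noncomputable def torsionDual : Submodule A (A →ₗ[k] k) where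
  carrier := {f | ∃ n : ℕ, 1 ≤ n ∧ ∀ x ∈ (IsLocalRing.maximalIdeal A) ^ n, f x = 0}
  add_mem' := by
    rintro f g ⟨n, hn, hf⟩ ⟨m, hm, hg⟩
    refine ⟨n + m, by omega, fun x hx => ?_⟩
    have hxn : x ∈ (IsLocalRing.maximalIdeal A) ^ n :=
      Ideal.pow_le_pow_right (by omega) hx
    have hxm : x ∈ (IsLocalRing.maximalIdeal A) ^ m :=
      Ideal.pow_le_pow_right (by omega) hx
    simp [LinearMap.add_apply, hf x hxn, hg x hxm]
  zero_mem' := ⟨1, le_refl 1, fun x _ => rfl⟩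
  smul_mem' := by
    rintro a f ⟨n, hn, hf⟩
    exact ⟨n, hn, fun x hx => hf (a * x) (Ideal.mul_mem_left _ a hx)⟩

instance : SMulCommClass A k (torsionDual k A) :=
  ⟨fun a c x => Subtype.ext (smul_comm a c (x : A →ₗ[k] k))⟩

/-- The natural map `Hom_A(Y,E) → Hom_k(Y,k)`, `g ↦ (y ↦ g(y)(1))`. -/
noncomputable def restrictFunctional (Y : Type u) [AddCommGroup Y] [Module k Y]
    [Module A Y] [IsScalarTower k A Y] (g : Y →ₗ[A] torsionDual k A) : Y →ₗ[k] k where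
  toFun y := ((g y : torsionDual k A) : A →ₗ[k] k) 1
  map_add' y z := by simp
  map_smul' c y := by
    have h1 : g (c • y) = (algebraMap k A c) • g y := by
      rw [← algebraMap_smul A c y, map_smul]
    have h2 : ((algebraMap k A c • g y : torsionDual k A) : A →ₗ[k] k) =
        algebraMap k A c • ((g y : torsionDual k A) : A →ₗ[k] k) := rfl
    show ((g (c • y) : torsionDual k A) : A →ₗ[k] k) 1 =
      (RingHom.id k) c • ((g y : torsionDual k A) : A →ₗ[k] k) 1
    rw [h1, h2, dual_smul_apply, mul_one, Algebra.algebraMap_eq_smul_one, map_smul,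
      smul_eq_mul, smul_eq_mul, RingHom.id_apply]

/-- Let `(A,m)` be a commutative noetherian local `k`-algebra with `dim_k(A/m) < ∞`, and
let `E ⊆ Hom_k(A,k)` be the `m`-torsion submodule of the `k`-linear dual of `A`.  For any
finitely generated `A`-module `Y`, the map `Hom_A(Y,E) → Hom_k(Y,k)`, `g ↦ (y ↦ g(y)(1))`,
is injective, with image exactly the set of `k`-linear functionals vanishing on `m^n · Y`
(Auxiliary: the inverse construction `h ↦ (y ↦ (a ↦ h (a • y)))`.) -/
noncomputable def ofFunctional (Y : Type u) [AddCommGroup Y] [Module k Y]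
    [Module A Y] [IsScalarTower k A Y] (h : Y →ₗ[k] k) (n : ℕ) (hn : 1 ≤ n)
    (hv : ∀ y ∈ (IsLocalRing.maximalIdeal A ^ n) • (⊤ : Submodule A Y), h y = 0) :
    Y →ₗ[A] torsionDual k A where
  toFun y := ⟨{ toFun := fun a => h (a • y)
                map_add' := fun a b =>
                  show h ((a + b) • y) = h (a • y) + h (b • y) by rw [add_smul, map_add]
                map_smul' := fun c a =>
                  show h ((c • a) • y) = c • h (a • y) by rw [smul_assoc, map_smul] },
    ⟨n, hn, fun x hx => hv (x • y) (Submodule.smul_mem_smul hx trivial)⟩⟩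
  map_add' y z := Subtype.ext (LinearMap.ext fun a => by
    show h (a • (y + z)) = h (a • y) + h (a • z)
    rw [smul_add, map_add])
  map_smul' b y := Subtype.ext (LinearMap.ext fun a =>
    show h (a • b • y) = h ((b * a) • y) by rw [smul_smul, mul_comm])

/-- Let `(A,m)` be a commutative noetherian local `k`-algebra with `dim_k(A/m) < ∞`. -/
theorem injective_range_restrictFunctional [IsNoetherianRing A]
    (hfd : FiniteDimensional k (A ⧸ IsLocalRing.maximalIdeal A))
    (Y : Type u) [AddCommGroup Y] [Module k Y] [Module A Y] [IsScalarTower k A Y]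
    [Module.Finite A Y] :
    Function.Injective (restrictFunctional k A Y) ∧
      Set.range (restrictFunctional k A Y) =
        {h : Y →ₗ[k] k | ∃ n : ℕ, 1 ≤ n ∧
          ∀ y ∈ (IsLocalRing.maximalIdeal A ^ n) • (⊤ : Submodule A Y), h y = 0} := by
  have key : ∀ (g : Y →ₗ[A] torsionDual k A) (a : A) (y : Y),
      restrictFunctional k A Y g (a • y) = ((g y : torsionDual k A) : A →ₗ[k] k) a := by
    intro g a y
    show ((g (a • y) : torsionDual k A) : A →ₗ[k] k) 1 = _
    rw [map_smul]
    show ((g y : torsionDual k A) : A →ₗ[k] k) (a * 1) = _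
    rw [mul_one]
  constructor
  · intro g₁ g₂ hEq
    apply LinearMap.ext
    intro y
    have : ∀ a : A, ((g₁ y : torsionDual k A) : A →ₗ[k] k) a =
        ((g₂ y : torsionDual k A) : A →ₗ[k] k) a := by
      intro a
      rw [← key, ← key, hEq]
    exact Subtype.ext (LinearMap.ext this)
  · ext h
    constructor
    · rintro ⟨g, rfl⟩
      obtain ⟨s, hs⟩ := Module.finite_def.mp (inferInstance : Module.Finite A Y)
      choose nf hnf1 hnf2 using fun y : Y => (g y).2
      set N : ℕ := s.sup nf + 1 with hN
      have claim : ∀ z : Y, ∀ x ∈ IsLocalRing.maximalIdeal A ^ N,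
          ((g z : torsionDual k A) : A →ₗ[k] k) x = 0 := by
        intro z
        have hz : z ∈ Submodule.span A (s : Set Y) := by rw [hs]; trivial
        induction hz using Submodule.span_induction with
        | mem y hy =>
          intro x hx
          have hle : nf y ≤ N := le_trans (Finset.le_sup hy) (Nat.le_succ _)
          exact hnf2 y x (Ideal.pow_le_pow_right hle hx)
        | zero => intro x hx; rw [map_zero]; rfl
        | add y z _ _ ihy ihz =>
          intro x hx
          rw [map_add]
          show ((g y : torsionDual k A) : A →ₗ[k] k) x +
            ((g z : torsionDual k A) : A →ₗ[k] k) x = 0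
          rw [ihy x hx, ihz x hx, add_zero]
        | smul a y _ ih =>
          intro x hx
          rw [map_smul]
          show ((g y : torsionDual k A) : A →ₗ[k] k) (a * x) = 0
          exact ih (a * x) (Ideal.mul_mem_left _ a hx)
      refine ⟨N, by omega, fun y hy => ?_⟩
      refine Submodule.smul_induction_on hy (fun a ha z _ => ?_) (fun y z ihy ihz => ?_)
      · rw [key]; exact claim z a ha
      · rw [map_add, ihy, ihz, add_zero]
    · rintro ⟨n, hn, hv⟩
      exact ⟨ofFunctional k A Y h n hn hv, LinearMap.ext fun y => by
        show h ((1 : A) • y) = h y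
        rw [one_smul]⟩
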